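/- Let G be a graph partitioned into clusters S_1, ..., S_k such that each S_i has outer conductance Φ_G(S_i) ≤ 1/2 and inner conductance Φ_{G[S_i]} ≥ Φ_in for every i, and suppose Δ(S_i)/δ(S_i) ≤ η_S for all i, where Δ(S_i), δ(S_i) are the maximum and minimum degrees (in G) of vertices of S_i. Then the sum over i of |S_i| * vol(S_i) is at most (18 * η_S / Φ_in) * OPT_G, where OPT_G is the minimum Dasgupta cost over all HC trees of G. -/

import Mathlib

/-- A binary hierarchical-clustering tree with leaves labelled by vertices. -/
inductive HCTree (V : Type*) where
  | leaf : V → HCTree V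
  | node : HCTree V → HCTree V → HCTree V

namespace HCTree

variable {V : Type*}

def leavesList : HCTree V → List V
  | .leaf v => [v]
  | .node l r => l.leavesList ++ r.leavesList

variable [DecidableEq V]

def leaves : HCTree V → Finset V
  | .leaf v => {v}
  | .node l r => l.leaves ∪ r.leaves

/-- Number of leaves below the lowest common ancestor of `u` and `v`. -/
def lcaSize : HCTree V → V → V → ℕ
  | .leaf _, _, _ => 1
  | .node l r, u, v =>
    if u ∈ l.leaves ∧ v ∈ l.leaves then l.lcaSize u v
    else if u ∈ r.leaves ∧ v ∈ r.leaves then r.lcaSize u v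
    else (l.leaves ∪ r.leaves).card

end HCTree

open Finset

variable {V : Type*} [Fintype V] [DecidableEq V]

noncomputable def deg (w : V → V → ℝ) (u : V) : ℝ := ∑ v, w u v

noncomputable def volw (w : V → V → ℝ) (S : Finset V) : ℝ := ∑ u ∈ S, deg w u

noncomputable def cutw (w : V → V → ℝ) (S T : Finset V) : ℝ :=
  ∑ u ∈ S, ∑ v ∈ T, w u v

/-- `volIn w W A` is the volume of `A ⊆ W` in the induced subgraph `G[W]`. -/
noncomputable def volIn (w : V → V → ℝ) (W A : Finset V) : ℝ :=
  ∑ u ∈ A, ∑ v ∈ W, w u v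

/-- Dasgupta's cost of an HC tree (sum over ordered pairs, divided by two). -/
noncomputable def dasguptaCost (w : V → V → ℝ) (T : HCTree V) : ℝ :=
  (∑ u, ∑ v, w u v * (T.lcaSize u v : ℝ)) / 2


namespace HCTree
variable {V : Type*} [DecidableEq V]

lemma mem_leaves_iff (t : HCTree V) (u : V) : u ∈ t.leaves ↔ u ∈ t.leavesList := by
  induction t with
  | leaf v => simp [leaves, leavesList]
  | node l r hl hr => simp [leaves, leavesList, hl, hr]

lemma nodup_left {l r : HCTree V} (h : (node l r).leavesList.Nodup) : l.leavesList.Nodup := by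
  simpa [leavesList] using (List.nodup_append.mp h).1

lemma nodup_right {l r : HCTree V} (h : (node l r).leavesList.Nodup) : r.leavesList.Nodup := by
  simpa [leavesList] using (List.nodup_append.mp h).2.1

lemma disj_leaves {l r : HCTree V} (h : (node l r).leavesList.Nodup) :
    Disjoint l.leaves r.leaves := by
  have hd : l.leavesList.Disjoint r.leavesList := by
    simpa [leavesList] using (List.nodup_append'.mp h).2.2
  rw [Finset.disjoint_left]
  intro a ha har
  exact hd ((mem_leaves_iff l a).mp ha) ((mem_leaves_iff r a).mp har)

lemma lcaSize_comm (t : HCTree V) (u v : V) : t.lcaSize u v = t.lcaSize v u := by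
  induction t with
  | leaf x => rfl
  | node l r hl hr =>
    simp only [lcaSize, hl, hr, and_comm (a := u ∈ l.leaves), and_comm (a := u ∈ r.leaves)]


end HCTree

section Aux
variable {V : Type*} [Fintype V] [DecidableEq V]

lemma volIn_nonneg (w : V → V → ℝ) (hnonneg : ∀ u v, 0 ≤ w u v) (W A : Finset V) :
    0 ≤ volIn w W A :=
  Finset.sum_nonneg fun _ _ => Finset.sum_nonneg fun _ _ => hnonneg _ _

lemma volIn_mono (w : V → V → ℝ) (hnonneg : ∀ u v, 0 ≤ w u v) (W : Finset V)
    {A B : Finset V} (h : A ⊆ B) : volIn w W A ≤ volIn w W B :=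
  Finset.sum_le_sum_of_subset_of_nonneg h
    (fun _ _ _ => Finset.sum_nonneg fun _ _ => hnonneg _ _)

lemma volIn_union (w : V → V → ℝ) (W : Finset V) {A B : Finset V} (h : Disjoint A B) :
    volIn w W (A ∪ B) = volIn w W A + volIn w W B :=
  Finset.sum_union h

lemma exists_cut_set (w : V → V → ℝ) (S0 : Finset V) (M c : ℝ)
    (hc : ∀ X : Finset V, 2/3*M < volIn w S0 (X ∩ S0) → c ≤ ((X ∩ S0).card : ℝ))
    (hx : ∀ x : V, volIn w S0 ({x} ∩ S0) ≤ 2/3*M) :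
    ∀ t : HCTree V, t.leavesList.Nodup → 2/3*M < volIn w S0 (t.leaves ∩ S0) →
    ∃ A, A ⊆ t.leaves ∩ S0 ∧ M/3 < volIn w S0 A ∧ volIn w S0 A ≤ 2/3*M ∧
      ∀ u ∈ A, ∀ v ∈ t.leaves ∩ S0, v ∉ A → c ≤ (t.lcaSize u v : ℝ) := by
  intro t
  induction t with
  | leaf x =>
    intro _ hv
    exact absurd hv (not_lt.mpr (hx x))
  | node l r ihl ihr =>
    intro hn hv
    have hdlr : Disjoint l.leaves r.leaves := HCTree.disj_leaves hn
    have hleq : (HCTree.node l r).leaves = l.leaves ∪ r.leaves := rfl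
    have hsplit : (HCTree.node l r).leaves ∩ S0 = (l.leaves ∩ S0) ∪ (r.leaves ∩ S0) := by
      rw [hleq, Finset.union_inter_distrib_right]
    have hd2 : Disjoint (l.leaves ∩ S0) (r.leaves ∩ S0) :=
      hdlr.mono Finset.inter_subset_left Finset.inter_subset_left
    have hadd : volIn w S0 ((HCTree.node l r).leaves ∩ S0)
        = volIn w S0 (l.leaves ∩ S0) + volIn w S0 (r.leaves ∩ S0) := by
      rw [hsplit, volIn_union w S0 hd2]
    -- the generic "big lca" bound for separated pairs
    have hbig : ∀ u v : V, u ∈ l.leaves → v ∈ r.leaves →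
        c ≤ ((HCTree.node l r).lcaSize u v : ℝ) := by
      intro u v hul hvr
      have hur : u ∉ r.leaves := Finset.disjoint_left.mp hdlr hul
      have hvl : v ∉ l.leaves := Finset.disjoint_right.mp hdlr hvr
      have hval : (HCTree.node l r).lcaSize u v = (l.leaves ∪ r.leaves).card := by
        simp [HCTree.lcaSize, hvl, hur]
      rw [hval]
      refine le_trans (hc (l.leaves ∪ r.leaves) ?_) ?_
      · rw [← hleq]; exact hv
      · exact_mod_cast Nat.cast_le.mpr (Finset.card_le_card Finset.inter_subset_left)
    by_cases hl2 : 2/3*M < volIn w S0 (l.leaves ∩ S0)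
    · obtain ⟨A, hA, h1, h2, hlca⟩ := ihl (HCTree.nodup_left hn) hl2
      refine ⟨A, hA.trans (by rw [hsplit]; exact Finset.subset_union_left), h1, h2, ?_⟩
      intro u hu v hv' hvA
      have hul : u ∈ l.leaves := (Finset.mem_inter.mp (hA hu)).1
      have hvS : v ∈ S0 := (Finset.mem_inter.mp hv').2
      by_cases hvl : v ∈ l.leaves
      · have hrec : (HCTree.node l r).lcaSize u v = l.lcaSize u v := by
          simp [HCTree.lcaSize, hul, hvl]
        rw [hrec]
        exact hlca u hu v (Finset.mem_inter.mpr ⟨hvl, hvS⟩) hvA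
      · have hvr : v ∈ r.leaves := by
          have := (Finset.mem_inter.mp hv').1
          rw [hleq, Finset.mem_union] at this
          tauto
        exact hbig u v hul hvr
    · by_cases hr2 : 2/3*M < volIn w S0 (r.leaves ∩ S0)
      · obtain ⟨A, hA, h1, h2, hlca⟩ := ihr (HCTree.nodup_right hn) hr2
        refine ⟨A, hA.trans (by rw [hsplit]; exact Finset.subset_union_right), h1, h2, ?_⟩
        intro u hu v hv' hvA
        have hur : u ∈ r.leaves := (Finset.mem_inter.mp (hA hu)).1
        have hvS : v ∈ S0 := (Finset.mem_inter.mp hv').2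
        by_cases hvr : v ∈ r.leaves
        · have hul' : u ∉ l.leaves := Finset.disjoint_right.mp hdlr hur
          have hrec : (HCTree.node l r).lcaSize u v = r.lcaSize u v := by
            simp [HCTree.lcaSize, hul', hur, hvr]
          rw [hrec]
          exact hlca u hu v (Finset.mem_inter.mpr ⟨hvr, hvS⟩) hvA
        · have hvl : v ∈ l.leaves := by
            have := (Finset.mem_inter.mp hv').1
            rw [hleq, Finset.mem_union] at this
            tauto
          rw [HCTree.lcaSize_comm]
          exact hbig v u hvl hur
      · push_neg at hl2 hr2
        have hab : 2/3*M < volIn w S0 (l.leaves ∩ S0) + volIn w S0 (r.leaves ∩ S0) := by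
          rw [← hadd]; exact hv
        rcases le_total (volIn w S0 (r.leaves ∩ S0)) (volIn w S0 (l.leaves ∩ S0)) with hba | hab2
        · refine ⟨l.leaves ∩ S0, by rw [hsplit]; exact Finset.subset_union_left,
            by linarith, hl2, ?_⟩
          intro u hu v hv' hvA
          have hul : u ∈ l.leaves := (Finset.mem_inter.mp hu).1
          have hvS : v ∈ S0 := (Finset.mem_inter.mp hv').2
          have hvr : v ∈ r.leaves := by
            have := (Finset.mem_inter.mp hv').1
            rw [hleq, Finset.mem_union] at this
            rcases this with h | h
            · exact absurd (Finset.mem_inter.mpr ⟨h, hvS⟩) hvA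
            · exact h
          exact hbig u v hul hvr
        · refine ⟨r.leaves ∩ S0, by rw [hsplit]; exact Finset.subset_union_right,
            by linarith, hr2, ?_⟩
          intro u hu v hv' hvA
          have hur : u ∈ r.leaves := (Finset.mem_inter.mp hu).1
          have hvS : v ∈ S0 := (Finset.mem_inter.mp hv').2
          have hvl : v ∈ l.leaves := by
            have := (Finset.mem_inter.mp hv').1
            rw [hleq, Finset.mem_union] at this
            rcases this with h | h
            · exact h
            · exact absurd (Finset.mem_inter.mpr ⟨h, hvS⟩) hvA
          rw [HCTree.lcaSize_comm]
          exact hbig v u hvl hur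

lemma cutw_comm (w : V → V → ℝ) (hsymm : ∀ u v, w u v = w v u) (A B : Finset V) :
    cutw w A B = cutw w B A := by
  rw [cutw, cutw, Finset.sum_comm]
  exact Finset.sum_congr rfl fun u _ => Finset.sum_congr rfl fun v _ => hsymm v u

lemma cutw_nonneg (w : V → V → ℝ) (hnonneg : ∀ u v, 0 ≤ w u v) (A B : Finset V) :
    0 ≤ cutw w A B :=
  Finset.sum_nonneg fun _ _ => Finset.sum_nonneg fun _ _ => hnonneg _ _

lemma cluster_bound (w : V → V → ℝ)
    (hsymm : ∀ u v, w u v = w v u)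
    (hnonneg : ∀ u v, 0 ≤ w u v)
    (hself : ∀ u, w u u = 0)
    (Si : Finset V) (ηS Φin : ℝ) (hΦin : 0 < Φin) (hηS : 1 ≤ ηS)
    (hout : cutw w Si Siᶜ ≤ (1 / 2) * volw w Si)
    (hin : ∀ A ⊆ Si, volIn w Si A ≤ volIn w Si Si / 2 →
      Φin * volIn w Si A ≤ cutw w A (Si \ A))
    (hdeg : ∀ u ∈ Si, ∀ v ∈ Si, deg w u ≤ ηS * deg w v)
    (T : HCTree V) (hleaves : T.leaves = Finset.univ) (hnodup : T.leavesList.Nodup) :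
    (Si.card : ℝ) * volw w Si
      ≤ 18 * ηS / Φin * ((∑ u ∈ Si, ∑ v ∈ Si, w u v * (T.lcaSize u v : ℝ)) / 2) := by
  have hηS0 : (0:ℝ) < ηS := lt_of_lt_of_le one_pos hηS
  have hcoeff0 : (0:ℝ) ≤ 18 * ηS / Φin := by positivity
  have hcost0 : (0:ℝ) ≤ ∑ u ∈ Si, ∑ v ∈ Si, w u v * (T.lcaSize u v : ℝ) :=
    Finset.sum_nonneg fun u _ => Finset.sum_nonneg fun v _ =>
      mul_nonneg (hnonneg u v) (Nat.cast_nonneg _)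
  have hM0 : 0 ≤ volIn w Si Si := volIn_nonneg w hnonneg Si Si
  have hcut0 : 0 ≤ cutw w Si Siᶜ := cutw_nonneg w hnonneg _ _
  have hVGeq : volw w Si = volIn w Si Si + cutw w Si Siᶜ := by
    rw [volw, volIn, cutw, ← Finset.sum_add_distrib]
    exact Finset.sum_congr rfl fun u _ => (Finset.sum_add_sum_compl Si _).symm
  have hMhalf : volw w Si ≤ 2 * volIn w Si Si := by linarith
  have hVG0 : 0 ≤ volw w Si := by linarith
  rcases eq_or_lt_of_le hVG0 with hVGz | hVGpos
  · rw [← hVGz, mul_zero]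
    exact mul_nonneg hcoeff0 (by linarith)
  -- nonempty cluster, minimum-degree vertex
  have hMpos : 0 < volIn w Si Si := by linarith
  have hne : Si.Nonempty := by
    rcases Si.eq_empty_or_nonempty with h | h
    · rw [h] at hMpos; simp [volIn] at hMpos
    · exact h
  obtain ⟨u₀, hu₀, hmin⟩ := Si.exists_min_image (deg w) hne
  have hd00 : 0 ≤ deg w u₀ := Finset.sum_nonneg fun v _ => hnonneg _ _
  have hdub : ∀ u ∈ Si, deg w u ≤ ηS * deg w u₀ := fun u hu => hdeg u hu u₀ hu₀
  have hnd : (Si.card : ℝ) * deg w u₀ ≤ volw w Si := by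
    have := Finset.card_nsmul_le_sum Si (deg w) (deg w u₀) hmin
    simpa [nsmul_eq_mul, volw] using this
  have hd0pos : 0 < deg w u₀ := by
    rcases lt_or_ge 0 (deg w u₀) with h | h
    · exact h
    · exfalso
      have hz : deg w u₀ = 0 := le_antisymm h hd00
      have : volw w Si ≤ 0 := Finset.sum_nonpos fun u hu => by
        have := hdub u hu; rw [hz] at this; linarith
      linarith
  have hden : (0:ℝ) < 3 * (ηS * deg w u₀) := by positivity
  -- threshold
  set c : ℝ := volw w Si / (3 * (ηS * deg w u₀)) with hc_def
  have hcpos : 0 < c := by positivity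
  have hc : ∀ X : Finset V, 2/3 * volIn w Si Si < volIn w Si (X ∩ Si) →
      c ≤ ((X ∩ Si).card : ℝ) := by
    intro X hX
    have h1 : volIn w Si (X ∩ Si) ≤ ((X ∩ Si).card : ℝ) * (ηS * deg w u₀) := by
      have h2 : volIn w Si (X ∩ Si) ≤ ∑ u ∈ X ∩ Si, deg w u := by
        refine Finset.sum_le_sum fun u _ => ?_
        exact Finset.sum_le_sum_of_subset_of_nonneg (Finset.subset_univ Si)
          fun v _ _ => hnonneg u v
      have h3 : ∑ u ∈ X ∩ Si, deg w u ≤ ((X ∩ Si).card : ℝ) * (ηS * deg w u₀) := by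
        have := Finset.sum_le_card_nsmul (X ∩ Si) (deg w) (ηS * deg w u₀)
          (fun u hu => hdub u (Finset.mem_inter.mp hu).2)
        simpa [nsmul_eq_mul] using this
      linarith
    rw [hc_def, div_le_iff₀ hden]
    nlinarith
  have hx : ∀ x : V, volIn w Si ({x} ∩ Si) ≤ 2/3 * volIn w Si Si := by
    intro x
    by_cases hxS : x ∈ Si
    · have hxi : ({x} : Finset V) ∩ Si = {x} := by
        rw [Finset.inter_eq_left]; simpa using hxS
      rw [hxi]
      have e1 : volIn w Si {x} = ∑ v ∈ Si, w x v := by simp [volIn]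
      have e5 : volIn w Si Si = ∑ u ∈ Si \ {x}, (∑ v ∈ Si, w u v) + ∑ v ∈ Si, w x v :=
        Finset.sum_eq_sum_sdiff_singleton_add hxS _
      have e2 : ∑ u ∈ Si \ {x}, w u x ≤ ∑ u ∈ Si \ {x}, ∑ v ∈ Si, w u v := by
        refine Finset.sum_le_sum fun u _ => ?_
        exact Finset.single_le_sum (fun v _ => hnonneg u v) hxS
      have e3 : ∑ u ∈ Si \ {x}, w u x = ∑ v ∈ Si, w x v - w x x := by
        rw [Finset.sum_congr rfl (fun u _ => hsymm u x),
          Finset.sum_eq_sum_sdiff_singleton_add hxS (fun v => w x v)]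
        ring
      rw [hself x] at e3
      rw [e1]
      linarith
    · have hxi : ({x} : Finset V) ∩ Si = ∅ := by
        rw [Finset.singleton_inter_of_notMem hxS]
      rw [hxi]
      have : volIn w Si (∅ : Finset V) = 0 := by simp [volIn]
      rw [this]; linarith
  -- apply the structural lemma to T
  have hTroot : 2/3 * volIn w Si Si < volIn w Si (T.leaves ∩ Si) := by
    rw [hleaves, Finset.univ_inter]; linarith
  obtain ⟨A, hAsub, hA1, hA2, hlca⟩ := exists_cut_set w Si (volIn w Si Si) c hc hx T hnodup hTroot
  rw [hleaves, Finset.univ_inter] at hAsub hlca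
  -- the conductance cut bound
  have hvolAB : volIn w Si A + volIn w Si (Si \ A) = volIn w Si Si := by
    rw [← volIn_union w Si Finset.disjoint_sdiff, Finset.union_sdiff_of_subset hAsub]
  have hcutlb : Φin * (volIn w Si Si / 3) ≤ cutw w A (Si \ A) := by
    by_cases hAh : volIn w Si A ≤ volIn w Si Si / 2
    · have h := hin A hAsub hAh
      have : Φin * (volIn w Si Si / 3) ≤ Φin * volIn w Si A :=
        mul_le_mul_of_nonneg_left (by linarith) hΦin.le
      linarith
    · push_neg at hAh
      have hBle : volIn w Si (Si \ A) ≤ volIn w Si Si / 2 := by linarith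
      have h := hin (Si \ A) (Finset.sdiff_subset) hBle
      rw [_root_.sdiff_sdiff_eq_self hAsub] at h
      rw [cutw_comm w hsymm]
      have : Φin * (volIn w Si Si / 3) ≤ Φin * volIn w Si (Si \ A) :=
        mul_le_mul_of_nonneg_left (by linarith) hΦin.le
      linarith
  -- the double-sum lower bound
  have hsum : 2 * (c * cutw w A (Si \ A)) ≤ ∑ u ∈ Si, ∑ v ∈ Si, w u v * (T.lcaSize u v : ℝ) := by
    have hsplitu : ∑ u ∈ Si, ∑ v ∈ Si, w u v * (T.lcaSize u v : ℝ)
        = (∑ u ∈ A, ∑ v ∈ Si, w u v * (T.lcaSize u v : ℝ))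
          + ∑ u ∈ Si \ A, ∑ v ∈ Si, w u v * (T.lcaSize u v : ℝ) := by
      rw [← Finset.sum_union Finset.disjoint_sdiff, Finset.union_sdiff_of_subset hAsub]
    have hterm : ∀ u ∈ A, ∀ v ∈ Si \ A, w u v * c ≤ w u v * (T.lcaSize u v : ℝ) := by
      intro u hu v hv
      have hvSi : v ∈ Si := (Finset.mem_sdiff.mp hv).1
      have hvA : v ∉ A := (Finset.mem_sdiff.mp hv).2
      exact mul_le_mul_of_nonneg_left (hlca u hu v hvSi hvA) (hnonneg u v)
    have h1 : c * cutw w A (Si \ A) ≤ ∑ u ∈ A, ∑ v ∈ Si, w u v * (T.lcaSize u v : ℝ) := by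
      have ha : c * cutw w A (Si \ A) = ∑ u ∈ A, ∑ v ∈ Si \ A, w u v * c := by
        rw [cutw, Finset.mul_sum]
        refine Finset.sum_congr rfl fun u _ => ?_
        rw [Finset.mul_sum]
        refine Finset.sum_congr rfl fun v _ => ?_
        ring
      rw [ha]
      refine Finset.sum_le_sum fun u hu => ?_
      calc ∑ v ∈ Si \ A, w u v * c ≤ ∑ v ∈ Si \ A, w u v * (T.lcaSize u v : ℝ) :=
            Finset.sum_le_sum fun v hv => hterm u hu v hv
        _ ≤ ∑ v ∈ Si, w u v * (T.lcaSize u v : ℝ) :=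
            Finset.sum_le_sum_of_subset_of_nonneg Finset.sdiff_subset
              fun v _ _ => mul_nonneg (hnonneg u v) (Nat.cast_nonneg _)
    have h2 : c * cutw w A (Si \ A) ≤ ∑ u ∈ Si \ A, ∑ v ∈ Si, w u v * (T.lcaSize u v : ℝ) := by
      have ha : c * cutw w A (Si \ A) = ∑ u ∈ Si \ A, ∑ v ∈ A, w u v * c := by
        rw [← cutw_comm w hsymm, cutw, Finset.mul_sum]
        refine Finset.sum_congr rfl fun u _ => ?_
        rw [Finset.mul_sum]
        refine Finset.sum_congr rfl fun v _ => ?_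
        ring
      rw [ha]
      refine Finset.sum_le_sum fun u hu => ?_
      have huSi : u ∈ Si := (Finset.mem_sdiff.mp hu).1
      have huA : u ∉ A := (Finset.mem_sdiff.mp hu).2
      calc ∑ v ∈ A, w u v * c ≤ ∑ v ∈ A, w u v * (T.lcaSize u v : ℝ) := by
            refine Finset.sum_le_sum fun v hv => ?_
            refine mul_le_mul_of_nonneg_left ?_ (hnonneg u v)
            rw [HCTree.lcaSize_comm]
            exact hlca v hv u huSi huA
        _ ≤ ∑ v ∈ Si, w u v * (T.lcaSize u v : ℝ) :=
            Finset.sum_le_sum_of_subset_of_nonneg (hAsub)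
              fun v _ _ => mul_nonneg (hnonneg u v) (Nat.cast_nonneg _)
    linarith
  -- final arithmetic
  have h18 : (Si.card : ℝ) * volw w Si ≤ 18 * ηS / Φin * (c * (Φin * (volIn w Si Si / 3))) := by
    have e : 18 * ηS / Φin * (c * (Φin * (volIn w Si Si / 3)))
        = 2 * volw w Si * volIn w Si Si / deg w u₀ := by
      rw [hc_def]; field_simp; ring
    rw [e, le_div_iff₀ hd0pos]
    nlinarith [mul_le_mul_of_nonneg_left hnd hVG0]
  have hchain : c * (Φin * (volIn w Si Si / 3)) ≤
      (∑ u ∈ Si, ∑ v ∈ Si, w u v * (T.lcaSize u v : ℝ)) / 2 := by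
    have : c * (Φin * (volIn w Si Si / 3)) ≤ c * cutw w A (Si \ A) :=
      mul_le_mul_of_nonneg_left hcutlb hcpos.le
    linarith
  calc (Si.card : ℝ) * volw w Si ≤ 18 * ηS / Φin * (c * (Φin * (volIn w Si Si / 3))) := h18
    _ ≤ 18 * ηS / Φin * ((∑ u ∈ Si, ∑ v ∈ Si, w u v * (T.lcaSize u v : ℝ)) / 2) :=
      mul_le_mul_of_nonneg_left hchain hcoeff0

end Aux

/-- If `G` is partitioned into clusters `S_1, ..., S_k`, each with
outer conductance `Φ_G(S_i) ≤ 1/2`, inner conductance `Φ_{G[S_i]} ≥ Φ_in`, and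
degree ratio `Δ(S_i)/δ(S_i) ≤ η_S`, then
`∑ i |S_i| * vol(S_i) ≤ (18 η_S / Φ_in) * OPT_G`.  (`OPT_G` being the minimum
Dasgupta cost, this is expressed by bounding against the cost of an arbitrary
HC tree `T` of `G`.) -/
theorem sum_card_mul_vol_le_opt
    (w : V → V → ℝ)
    (hsymm : ∀ u v, w u v = w v u)
    (hnonneg : ∀ u v, 0 ≤ w u v)
    (hself : ∀ u, w u u = 0)
    (k : ℕ) (hk : 0 < k)
    (S : Fin k → Finset V)
    (hdisj : ∀ i j, i ≠ j → Disjoint (S i) (S j))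
    (hcover : ∀ v : V, ∃ i, v ∈ S i)
    (ηS Φin : ℝ) (hΦin : 0 < Φin)
    -- outer conductance at most 1/2
    (hout : ∀ i, cutw w (S i) (S i)ᶜ ≤ (1 / 2) * volw w (S i))
    -- inner conductance of every induced subgraph G[S i] at least Φin
    (hin : ∀ i, ∀ A ⊆ S i,
      volIn w (S i) A ≤ volIn w (S i) (S i) / 2 →
      Φin * volIn w (S i) A ≤ cutw w A (S i \ A))
    -- max degree over min degree within each cluster bounded by ηS
    (hdeg : ∀ i, ∀ u ∈ S i, ∀ v ∈ S i, deg w u ≤ ηS * deg w v)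
    (T : HCTree V)
    (hleaves : T.leaves = Finset.univ)
    (hnodup : T.leavesList.Nodup) :
    ∑ i, ((S i).card : ℝ) * volw w (S i)
      ≤ 18 * ηS / Φin * dasguptaCost w T := by
  by_cases hw0 : ∀ u v, w u v = 0
  · simp [volw, deg, dasguptaCost, hw0]
  · push_neg at hw0
    obtain ⟨u, v, huv⟩ := hw0
    have hwpos : 0 < w u v := lt_of_le_of_ne (hnonneg u v) (Ne.symm huv)
    have hdu : 0 < deg w u :=
      lt_of_lt_of_le hwpos (Finset.single_le_sum (fun x _ => hnonneg u x) (Finset.mem_univ v))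
    obtain ⟨i₀, hi₀⟩ := hcover u
    have hηS : 1 ≤ ηS := by
      have := hdeg i₀ u hi₀ u hi₀
      nlinarith
    have hcoeff0 : (0:ℝ) ≤ 18 * ηS / Φin := by positivity
    have hbound : ∀ i : Fin k, ((S i).card : ℝ) * volw w (S i)
        ≤ 18 * ηS / Φin * ((∑ x ∈ S i, ∑ y ∈ S i, w x y * (T.lcaSize x y : ℝ)) / 2) :=
      fun i => cluster_bound w hsymm hnonneg hself (S i) ηS Φin hΦin hηS (hout i)
        (hin i) (hdeg i) T hleaves hnodup
    have hDle : ∑ i, ∑ x ∈ S i, ∑ y ∈ S i, w x y * (T.lcaSize x y : ℝ)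
        ≤ ∑ x, ∑ y, w x y * (T.lcaSize x y : ℝ) := by
      have h1 : ∀ i : Fin k, ∑ x ∈ S i, ∑ y ∈ S i, w x y * (T.lcaSize x y : ℝ)
          ≤ ∑ x ∈ S i, ∑ y, w x y * (T.lcaSize x y : ℝ) :=
        fun i => Finset.sum_le_sum fun x _ =>
          Finset.sum_le_sum_of_subset_of_nonneg (Finset.subset_univ _)
            fun y _ _ => mul_nonneg (hnonneg x y) (Nat.cast_nonneg _)
      have huniv : (Finset.univ : Finset (Fin k)).biUnion S = Finset.univ := by
        ext x
        simp only [Finset.mem_biUnion, Finset.mem_univ, true_and, iff_true]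
        exact hcover x
      have h2 : ∑ i, ∑ x ∈ S i, ∑ y, w x y * (T.lcaSize x y : ℝ)
          = ∑ x, ∑ y, w x y * (T.lcaSize x y : ℝ) := by
        rw [← huniv, Finset.sum_biUnion]
        exact fun i _ j _ hij => hdisj i j hij
      calc ∑ i, ∑ x ∈ S i, ∑ y ∈ S i, w x y * (T.lcaSize x y : ℝ)
          ≤ ∑ i, ∑ x ∈ S i, ∑ y, w x y * (T.lcaSize x y : ℝ) := Finset.sum_le_sum fun i _ => h1 i
        _ = ∑ x, ∑ y, w x y * (T.lcaSize x y : ℝ) := h2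
    calc ∑ i, ((S i).card : ℝ) * volw w (S i)
        ≤ ∑ i, 18 * ηS / Φin * ((∑ x ∈ S i, ∑ y ∈ S i, w x y * (T.lcaSize x y : ℝ)) / 2) :=
          Finset.sum_le_sum fun i _ => hbound i
      _ = 18 * ηS / Φin * ((∑ i, ∑ x ∈ S i, ∑ y ∈ S i, w x y * (T.lcaSize x y : ℝ)) / 2) := by
          rw [← Finset.mul_sum, ← Finset.sum_div]
      _ ≤ 18 * ηS / Φin * dasguptaCost w T := by
          refine mul_le_mul_of_nonneg_left ?_ hcoeff0
          rw [dasguptaCost]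
          linarith
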